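/- (Bound on decrement rounds in Algorithm 4.) Let σ = (a₁, …, a_m) be a stream of elements of a type with decidable equality, let k ≥ 2, and run the Misra–Gries algorithm with capacity k-1 on σ: maintain a finite map T from elements to positive natural-number counters; on reading aᵢ, if aᵢ has a counter in T, increment it; else if T currently holds fewer than k-1 elements, insert aᵢ with counter 1; otherwise decrement the counter of every element of T by 1 and remove those that reach 0 (a 'decrement round'). Then the total number of decrement rounds performed while processing the whole stream is at most m/k. -/

import Mathlib

/-- One step of the Misra–Gries algorithm with capacity `k - 1`.  The state is
a finitely supported map `f : α →₀ ℕ` from elements to (positive) counters;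
elements with counter `0` are exactly those not present in the map.  On reading
`a`: if `a` has a counter, increment it; else if fewer than `k - 1` elements
are currently stored, insert `a` with counter `1`; otherwise perform a
*decrement round*: decrement every counter by `1` (counters reaching `0` drop
out of the support, i.e. are removed). -/
noncomputable def mgStep {α : Type*} [DecidableEq α] (k : ℕ) (f : α →₀ ℕ) (a : α) :
    α →₀ ℕ :=
  if 0 < f a then f.update a (f a + 1)
  else if f.support.card < k - 1 then f.update a 1
  else f.mapRange (· - 1) (Nat.zero_sub 1)

/-- Running the Misra–Gries algorithm with capacity `k - 1` on the stream `σ`,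
starting from the empty map; `mgRun k σ j` is the final estimated count `f̂ⱼ`
of element `j` (`0` if `j` is absent from the final map). -/
noncomputable def mgRun {α : Type*} [DecidableEq α] (k : ℕ) (σ : List α) : α →₀ ℕ :=
  σ.foldl (mgStep k) 0

/-- The total number of decrement rounds performed while processing `σ`. -/
noncomputable def mgDecRounds {α : Type*} [DecidableEq α] (k : ℕ) (σ : List α) : ℕ :=
  (σ.foldl
    (fun p a =>
      (mgStep k p.1 a,
        if 0 < p.1 a then p.2
        else if p.1.support.card < k - 1 then p.2
        else p.2 + 1))
    ((0 : α →₀ ℕ), 0)).2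

namespace MGaux
set_option linter.unusedSectionVars false
variable {α : Type*} [DecidableEq α]

noncomputable def S (f : α →₀ ℕ) : ℕ := f.sum fun _ n => n

lemma S_add (f g : α →₀ ℕ) : S (f + g) = S f + S g :=
  Finsupp.sum_add_index' (fun _ => rfl) (fun _ _ _ => rfl)

lemma S_update (f : α →₀ ℕ) (a : α) (b : ℕ) :
    S (f.update a b) = S (f.erase a) + b := by
  rw [Finsupp.update_eq_erase_add_single, S_add]
  simp [S, Finsupp.sum_single_index]

lemma S_erase (f : α →₀ ℕ) (a : α) : S f = S (f.erase a) + f a := by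
  conv_lhs => rw [← Finsupp.erase_add_single a f]
  rw [S_add]
  simp [S, Finsupp.sum_single_index]

lemma S_eq_sum (f : α →₀ ℕ) : S f = ∑ x ∈ f.support, f x := rfl

lemma S_mapRange (f : α →₀ ℕ) :
    S (f.mapRange (· - 1) (Nat.zero_sub 1)) + f.support.card = S f := by
  have hsub : (f.mapRange (· - 1) (Nat.zero_sub 1)).support ⊆ f.support :=
    Finsupp.support_mapRange
  have h1 : S (f.mapRange (· - 1) (Nat.zero_sub 1)) = ∑ x ∈ f.support, (f x - 1) := by
    rw [S_eq_sum]
    rw [Finset.sum_subset hsub]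
    · simp
    · intro x _ hx
      simpa using (Finsupp.notMem_support_iff.mp hx)
  rw [h1, Finset.card_eq_sum_ones f.support, ← Finset.sum_add_distrib]
  apply Finset.sum_congr rfl
  intro x hx
  have : 1 ≤ f x := Nat.one_le_iff_ne_zero.mpr (Finsupp.mem_support_iff.mp hx)
  show f x - 1 + 1 = f x
  omega



lemma step_bound (k : ℕ) (hk : 2 ≤ k) (f : α →₀ ℕ) (a : α)
    (hc : f.support.card ≤ k - 1) :
    (mgStep k f a).support.card ≤ k - 1 ∧
      S (mgStep k f a) +
        (if 0 < f a then 0 else if f.support.card < k - 1 then 0 else k) ≤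
      S f + 1 := by
  unfold mgStep
  by_cases h1 : 0 < f a
  · simp only [if_pos h1]
    have ha : a ∈ f.support := Finsupp.mem_support_iff.mpr h1.ne'
    constructor
    · rw [Finsupp.support_update_ne_zero f a (by omega), Finset.insert_eq_self.mpr ha]
      exact hc
    · rw [S_update]
      have := S_erase f a
      omega
  · have hfa : f a = 0 := by omega
    simp only [if_neg h1]
    by_cases h2 : f.support.card < k - 1
    · simp only [if_pos h2]
      constructor
      · rw [Finsupp.support_update_ne_zero f a one_ne_zero]
        calc (insert a f.support).card ≤ f.support.card + 1 := Finset.card_insert_le _ _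
          _ ≤ k - 1 := by omega
      · rw [S_update]
        have := S_erase f a
        omega
    · simp only [if_neg h2]
      constructor
      · exact le_trans (Finset.card_le_card Finsupp.support_mapRange) hc
      · have := S_mapRange f
        omega

lemma fold_bound (k : ℕ) (hk : 2 ≤ k) :
    ∀ (σ : List α) (f : α →₀ ℕ) (d : ℕ), f.support.card ≤ k - 1 →
      (σ.foldl
        (fun p a =>
          (mgStep k p.1 a,
            if 0 < p.1 a then p.2
            else if p.1.support.card < k - 1 then p.2
            else p.2 + 1))
        (f, d)).1.support.card ≤ k - 1 ∧
      S (σ.foldl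
        (fun p a =>
          (mgStep k p.1 a,
            if 0 < p.1 a then p.2
            else if p.1.support.card < k - 1 then p.2
            else p.2 + 1))
        (f, d)).1 +
        k * (σ.foldl
        (fun p a =>
          (mgStep k p.1 a,
            if 0 < p.1 a then p.2
            else if p.1.support.card < k - 1 then p.2
            else p.2 + 1))
        (f, d)).2 ≤ S f + k * d + σ.length := by
  intro σ
  induction σ with
  | nil => intro f d hc; simpa using hc
  | cons a σ ih =>
    intro f d hc
    obtain ⟨hc', hs'⟩ := step_bound k hk f a hc
    obtain ⟨h1, h2⟩ := ih (mgStep k f a)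
      (if 0 < f a then d else if f.support.card < k - 1 then d else d + 1) hc'
    refine ⟨h1, ?_⟩
    simp only [List.foldl_cons, List.length_cons]
    refine le_trans h2 ?_
    split_ifs at hs' ⊢ <;> simp -failIfUnchanged only [Nat.mul_add, Nat.mul_one] at * <;> omega

end MGaux

/-- Bound on decrement rounds: running Misra–Gries with capacity `k - 1`
(`k ≥ 2`) on a stream of length `m` performs at most `m / k` decrement
rounds. -/
theorem mgDecRounds_le {α : Type*} [DecidableEq α] (k : ℕ) (hk : 2 ≤ k)
    (σ : List α) :
    (mgDecRounds k σ : ℝ) ≤ (σ.length : ℝ) / (k : ℝ) := by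
  have h := (MGaux.fold_bound k hk σ (0 : α →₀ ℕ) 0 (by simp)).2
  simp only [MGaux.S, Finsupp.sum_zero_index, Nat.mul_zero, Nat.zero_add, Nat.add_zero] at h
  have hkey : k * mgDecRounds k σ ≤ σ.length := by
    unfold mgDecRounds
    omega
  have hk0 : (0 : ℝ) < (k : ℝ) := by positivity
  rw [le_div_iff₀ hk0]
  calc (mgDecRounds k σ : ℝ) * k = ((k * mgDecRounds k σ : ℕ) : ℝ) := by push_cast; ring
    _ ≤ (σ.length : ℝ) := by exact_mod_cast hkey
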